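/- Under the stated assumptions, there exist constants 0 < c ≤ C < ∞ such that for all N ≥ 1, c ‖u_N − u‖_{H¹}² ≤ E_N − E ≤ C ‖u_N − u‖_{H¹}². (Lemma on convergence of the discrete ground state, eq. (EN-E).) -/

import Mathlib

open MeasureTheory intervalIntegral Real Filter Topology

noncomputable section



/-- `v` belongs to `H¹_per` with (weak) derivative `v'`. -/
def IsH1per (v v' : ℝ → ℝ) : Prop :=
  Continuous v ∧ (∀ x, v (x + 1) = v x) ∧ (∀ x, v' (x + 1) = v' x) ∧
  (∀ a b : ℝ, IntervalIntegrable v' volume a b) ∧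
  IntervalIntegrable (fun t => (v' t) ^ 2) volume 0 1 ∧
  (∀ x : ℝ, v x = v 0 + ∫ t in (0:ℝ)..x, v' t)

/-- The bilinear form `a_R`. -/
def aR (z1 z2 R : ℝ) (v v' w w' : ℝ → ℝ) : ℝ :=
  (∫ x in (0:ℝ)..1, v' x * w' x) - z1 * v 0 * w 0 - z2 * v R * w R

/-- `v` is a real trigonometric polynomial of degree at most `N`. -/
def InXN (N : ℕ) (v : ℝ → ℝ) : Prop :=
  ∃ c : ℤ → ℂ, (∀ k : ℤ, c (-k) = starRingEnd ℂ (c k)) ∧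
    ∀ x : ℝ, (v x : ℂ) =
      ∑ k ∈ Finset.Icc (-(N:ℤ)) (N:ℤ), c k * Complex.exp (2 * (π:ℂ) * Complex.I * (k:ℂ) * (x:ℂ))

/-- `(u, E)` is a ground state of the continuous problem for `z1, z2, R`. -/
def IsGroundState (z1 z2 R : ℝ) (u u' : ℝ → ℝ) (E : ℝ) : Prop :=
  IsH1per u u' ∧
  (∫ x in (0:ℝ)..1, (u x) ^ 2) = 1 ∧
  (∀ x : ℝ, 0 ≤ u x) ∧
  (∀ v v' : ℝ → ℝ, IsH1per v v' →
    aR z1 z2 R u u' v v' = E * ∫ x in (0:ℝ)..1, u x * v x) ∧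
  (∀ v v' : ℝ → ℝ, IsH1per v v' →
    E * ∫ x in (0:ℝ)..1, (v x) ^ 2 ≤ aR z1 z2 R v v' v v') ∧
  (∃ μ : ℝ, 0 < μ ∧ ∀ v v' : ℝ → ℝ, IsH1per v v' →
    (∫ x in (0:ℝ)..1, (v x) ^ 2) = 1 → (∫ x in (0:ℝ)..1, u x * v x) = 0 →
    E + μ ≤ aR z1 z2 R v v' v v')

/-- `(uN, EN)` is a discrete ground state in `X_N` for `z1, z2, R`. -/
def IsDiscreteGroundState (z1 z2 R : ℝ) (N : ℕ) (uN uN' : ℝ → ℝ) (EN : ℝ) : Prop :=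
  IsH1per uN uN' ∧ InXN N uN ∧
  (∫ x in (0:ℝ)..1, (uN x) ^ 2) = 1 ∧
  (0 ≤ ∫ x in (0:ℝ)..1, uN x) ∧
  (∀ v v' : ℝ → ℝ, IsH1per v v' → InXN N v →
    aR z1 z2 R uN uN' v v' = EN * ∫ x in (0:ℝ)..1, uN x * v x) ∧
  (∀ v v' : ℝ → ℝ, IsH1per v v' → InXN N v →
    EN * ∫ x in (0:ℝ)..1, (v x) ^ 2 ≤ aR z1 z2 R v v' v v')


set_option maxHeartbeats 1000000

section Helpers
open Set

theorem mulII {f g : ℝ → ℝ} {a b : ℝ}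
    (hf : IntervalIntegrable f volume a b) (hg : IntervalIntegrable g volume a b)
    (hf2 : IntervalIntegrable (fun t => (f t)^2) volume a b)
    (hg2 : IntervalIntegrable (fun t => (g t)^2) volume a b) :
    IntervalIntegrable (fun t => f t * g t) volume a b := by
  apply (hf2.add hg2).mono_fun (hf.def'.aestronglyMeasurable.mul hg.def'.aestronglyMeasurable)
  filter_upwards with x
  have h1 : |f x * g x| ≤ (f x)^2 + (g x)^2 := by
    nlinarith [sq_nonneg (|f x| - |g x|), sq_abs (f x), sq_abs (g x), abs_mul (f x) (g x),
      abs_nonneg (f x * g x)]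
  rw [abs_mul] at h1
  simpa [Real.norm_eq_abs, abs_of_nonneg (by positivity : (0:ℝ) ≤ (f x)^2 + (g x)^2)] using h1

/-- Cauchy–Schwarz for interval integrals. -/


theorem csII {f g : ℝ → ℝ} {a b : ℝ} (hab : a ≤ b)
    (hf : IntervalIntegrable f volume a b) (hg : IntervalIntegrable g volume a b)
    (hf2 : IntervalIntegrable (fun t => (f t)^2) volume a b)
    (hg2 : IntervalIntegrable (fun t => (g t)^2) volume a b) :
    (∫ x in a..b, f x * g x)^2 ≤ (∫ x in a..b, (f x)^2) * (∫ x in a..b, (g x)^2) := by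
  set A := ∫ x in a..b, (f x)^2 with hA
  set B := ∫ x in a..b, f x * g x with hB
  set C := ∫ x in a..b, (g x)^2 with hC
  have key : ∀ t : ℝ, 0 ≤ A * (t * t) + (2*B) * t + C := by
    intro t
    have h1 : (0:ℝ) ≤ ∫ x in a..b, (t * f x + g x)^2 :=
      integral_nonneg hab (fun x _ => sq_nonneg _)
    have h2 : (∫ x in a..b, (t * f x + g x)^2)
        = t^2 * A + (2*t) * B + C := by
      rw [hA, hB, hC]
      rw [← intervalIntegral.integral_const_mul, ← intervalIntegral.integral_const_mul, ← intervalIntegral.integral_add, ← intervalIntegral.integral_add]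
      · congr 1; funext x; ring
      · exact (hf2.const_mul _).add ((mulII hf hg hf2 hg2).const_mul _)
      · exact hg2
      · exact hf2.const_mul _
      · exact (mulII hf hg hf2 hg2).const_mul _
    nlinarith [h1, h2]
  have := discrim_le_zero key
  rw [discrim] at this
  nlinarith [this]


theorem combH1 {v v' w w' : ℝ → ℝ} (hv : IsH1per v v') (hw : IsH1per w w') (b c : ℝ) :
    IsH1per (fun x => b * v x + c * w x) (fun x => b * v' x + c * w' x) := by
  obtain ⟨hc1, hp1, hp1', hi1, hs1, hr1⟩ := hv
  obtain ⟨hc2, hp2, hp2', hi2, hs2, hr2⟩ := hw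
  refine ⟨((continuous_const.mul hc1).add (continuous_const.mul hc2)), fun x => by simp [hp1, hp2], fun x => by simp [hp1', hp2'], ?_, ?_, ?_⟩
  · exact fun a b' => ((hi1 a b').const_mul _).add ((hi2 a b').const_mul _)
  · have heq : (fun t => (b * v' t + c * w' t)^2)
        = fun t => b^2 * (v' t)^2 + (2*b*c) * (v' t * w' t) + c^2 * (w' t)^2 := by
      funext t; ring
    rw [heq]
    exact (((hs1.const_mul _).add
      (((mulII (hi1 0 1) (hi2 0 1) hs1 hs2)).const_mul _))).add (hs2.const_mul _)
  · intro x
    have : (∫ t in (0:ℝ)..x, (b * v' t + c * w' t))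
        = b * (∫ t in (0:ℝ)..x, v' t) + c * (∫ t in (0:ℝ)..x, w' t) := by
      rw [intervalIntegral.integral_add ((hi1 0 x).const_mul _) ((hi2 0 x).const_mul _),
        intervalIntegral.integral_const_mul, intervalIntegral.integral_const_mul]
    simp only []
    rw [this]
    rw [hr1 x, hr2 x]; ring


theorem oneH1 : IsH1per (fun _ => (1:ℝ)) (fun _ => (0:ℝ)) := by
  refine ⟨continuous_const, fun _ => rfl, fun _ => rfl,
    fun a b => intervalIntegrable_const, by simpa using (intervalIntegrable_const (c := (0:ℝ))), ?_⟩
  intro x; simp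


theorem uIntPos {u u' : ℝ → ℝ} (hH : IsH1per u u')
    (hnorm : (∫ x in (0:ℝ)..1, (u x) ^ 2) = 1) (hpos : ∀ x, 0 ≤ u x) :
    0 < ∫ x in (0:ℝ)..1, u x := by
  obtain ⟨x₀, hx₀, hmax'⟩ := (isCompact_Icc (a := (0:ℝ)) (b := 1)).exists_isMaxOn
    (nonempty_Icc.2 zero_le_one) (hH.1.continuousOn)
  have hmax : ∀ x ∈ Icc (0:ℝ) 1, u x ≤ u x₀ := fun x hx => hmax' hx
  set M := u x₀ with hM
  have hM0 : 0 ≤ M := hpos x₀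
  have hMpos : 0 < M := by
    rcases hM0.lt_or_eq with h | h
    · exact h
    · exfalso
      have hzero : ∀ x ∈ Icc (0:ℝ) 1, u x = 0 := by
        intro x hx
        exact le_antisymm (by simpa [← h] using hmax x hx) (hpos x)
      have h0 : (∫ x in (0:ℝ)..1, (u x)^2) = ∫ x in (0:ℝ)..1, (0:ℝ) := by
        apply intervalIntegral.integral_congr
        intro x hx
        rw [uIcc_of_le zero_le_one] at hx
        simp [hzero x hx]
      rw [hnorm] at h0; simp at h0
  have hle : (∫ x in (0:ℝ)..1, (u x)^2) ≤ M * ∫ x in (0:ℝ)..1, u x := by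
    rw [← intervalIntegral.integral_const_mul]
    apply intervalIntegral.integral_mono_on zero_le_one
      ((hH.1.pow 2).intervalIntegrable 0 1) ((hH.1.intervalIntegrable 0 1).const_mul M)
    intro x hx
    have h1 : u x ≤ M := hmax x hx
    show (u x)^2 ≤ M * u x
    nlinarith [hpos x]
  rw [hnorm] at hle
  nlinarith [hle, hMpos]


theorem traceBound {e e' : ℝ → ℝ} (hcont : Continuous e)
    (hi : ∀ a b : ℝ, IntervalIntegrable e' volume a b)
    (hs : IntervalIntegrable (fun t => (e' t)^2) volume 0 1)
    (hrep : ∀ x, e x = e 0 + ∫ t in (0:ℝ)..x, e' t)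
    {p δ : ℝ} (hp : p ∈ Icc (0:ℝ) 1) (hδ0 : 0 < δ) (hδ1 : δ ≤ 1) :
    (e p)^2 ≤ (2/δ) * (∫ x in (0:ℝ)..1, (e x)^2) + 2*δ*(∫ x in (0:ℝ)..1, (e' x)^2) := by
  set D2 := ∫ x in (0:ℝ)..1, (e' x)^2 with hD2
  have hD2nn : 0 ≤ D2 := integral_nonneg zero_le_one (fun x _ => sq_nonneg _)
  set a := min p (1-δ) with ha
  have ha0 : 0 ≤ a := le_min hp.1 (by linarith)
  have ha1 : a + δ ≤ 1 := by
    rcases min_le_iff.mp (le_refl a) with _ | _ <;>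
    · simp only [ha]
      rcases le_total p (1-δ) with h | h
      · rw [min_eq_left h]; linarith [hp.2]
      · rw [min_eq_right h]; linarith
  have hpa : a ≤ p := min_le_left _ _
  have hpδ : p ≤ a + δ := by
    rcases le_total p (1-δ) with h | h
    · rw [ha, min_eq_left h]; linarith
    · rw [ha, min_eq_right h]; linarith [hp.2]
  -- pointwise bound for y in [a, a+δ]
  have key : ∀ y ∈ Icc a (a+δ), (e p)^2 ≤ 2*(e y)^2 + 2*δ*D2 := by
    intro y hy
    have hy0 : 0 ≤ y := le_trans ha0 hy.1
    have hy1 : y ≤ 1 := le_trans hy.2 ha1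
    have hdiff : e p - e y = ∫ t in y..p, e' t := by
      rw [hrep p, hrep y]
      rw [add_sub_add_left_eq_sub, ← intervalIntegral.integral_interval_sub_left (hi 0 p) (hi 0 y)]
    set m := min y p with hm
    set M := max y p with hM
    have hmM : m ≤ M := min_le_max
    have hm0 : 0 ≤ m := le_min hy0 hp.1
    have hM1 : M ≤ 1 := max_le hy1 hp.2
    have hMm : M - m ≤ δ := by
      rcases le_total y p with h | h
      · rw [hm, hM, min_eq_left h, max_eq_right h]; linarith [hy.1]
      · rw [hm, hM, min_eq_right h, max_eq_left h]; linarith [hy.2]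
    have hsub : IntervalIntegrable (fun t => (e' t)^2) volume m M :=
      hs.mono_set (by rw [uIcc_of_le hmM, uIcc_of_le zero_le_one]; exact Icc_subset_Icc hm0 hM1)
    have hcs : (∫ t in m..M, e' t)^2 ≤ (∫ t in m..M, (e' t)^2) * (M - m) := by
      have := csII (g := fun _ => (1:ℝ)) hmM (hi m M)
        (intervalIntegrable_const (c := 1)) hsub
        (by simpa using (intervalIntegrable_const (μ := volume) (a := m) (b := M) (c := (1:ℝ))))
      simpa using this
    have hmono : (∫ t in m..M, (e' t)^2) ≤ D2 := by
      rw [hD2]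
      exact integral_mono_interval hm0 hmM hM1
        (Filter.Eventually.of_forall (fun x => sq_nonneg _)) hs
    have hsq : (∫ t in y..p, e' t)^2 = (∫ t in m..M, e' t)^2 := by
      rcases le_total y p with h | h
      · rw [hm, hM, min_eq_left h, max_eq_right h]
      · rw [hm, hM, min_eq_right h, max_eq_left h, intervalIntegral.integral_symm]; ring
    have h1 : (e p - e y)^2 ≤ δ * D2 := by
      rw [hdiff, hsq]
      calc (∫ t in m..M, e' t)^2 ≤ (∫ t in m..M, (e' t)^2) * (M - m) := hcs
        _ ≤ D2 * δ := by
            apply mul_le_mul hmono hMm (by linarith) hD2nn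
        _ = δ * D2 := mul_comm _ _
    nlinarith [h1, sq_nonneg (e p - 2*e y)]
  -- integrate over y
  have hint : δ * (e p)^2 ≤ 2 * (∫ y in a..(a+δ), (e y)^2) + 2*δ*D2*δ := by
    have h := intervalIntegral.integral_mono_on (μ := volume)
      (f := fun _ => (e p)^2) (g := fun y => 2*(e y)^2 + 2*δ*D2)
      (by linarith : a ≤ a + δ)
      (intervalIntegrable_const)
      ((((hcont.pow 2).intervalIntegrable a (a+δ)).const_mul 2).add
        (intervalIntegrable_const))
      key
    rw [intervalIntegral.integral_const,
      intervalIntegral.integral_add (f := fun y => 2*(e y)^2) (((hcont.pow 2).intervalIntegrable a (a+δ)).const_mul 2)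
        (intervalIntegrable_const),
      intervalIntegral.integral_const_mul, intervalIntegral.integral_const] at h
    simp only [add_sub_cancel_left, smul_eq_mul] at h
    calc δ * (e p)^2 = (e p)^2 * δ := mul_comm _ _
      _ ≤ 2 * (∫ y in a..(a+δ), (e y)^2) + 2*δ*D2*δ := by
          have : δ • (2*δ*D2) = 2*δ*D2*δ := by simp [smul_eq_mul]; ring
          linarith [h, this.symm.le, this.le]
  have hsubint : (∫ y in a..(a+δ), (e y)^2) ≤ ∫ x in (0:ℝ)..1, (e x)^2 :=
    integral_mono_interval ha0 (by linarith) ha1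
      (Filter.Eventually.of_forall (fun x => sq_nonneg _))
      ((hcont.pow 2).intervalIntegrable 0 1)
  have hmul : (e p)^2 * δ ≤ ((2/δ) * (∫ x in (0:ℝ)..1, (e x)^2) + 2*δ*D2) * δ := by
    have expand : ((2/δ) * (∫ x in (0:ℝ)..1, (e x)^2) + 2*δ*D2) * δ
        = 2 * (∫ x in (0:ℝ)..1, (e x)^2) + 2*δ*D2*δ := by field_simp
    rw [expand]
    nlinarith [hint, hsubint]
  exact le_of_mul_le_mul_right hmul hδ0

end Helpers

/-- Eq. (EN-E): there are constants `0 < c ≤ C < ∞` with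
`c‖u_N−u‖²_{H¹} ≤ E_N − E ≤ C‖u_N−u‖²_{H¹}` for all `N ≥ 1`,
where `‖w‖²_{H¹} = ∫₀¹ w² + ∫₀¹ (w')²`. -/
theorem energy_error_equiv_H1_error (z1 z2 R : ℝ) (hz1 : 0 < z1) (hz2 : 0 < z2)
    (hR : R ∈ Set.Ioo (0 : ℝ) 1)
    (u u' : ℝ → ℝ) (E : ℝ) (hu : IsGroundState z1 z2 R u u' E)
    (uN uN' : ℕ → ℝ → ℝ) (EN : ℕ → ℝ)
    (huN : ∀ N : ℕ, 1 ≤ N → IsDiscreteGroundState z1 z2 R N (uN N) (uN' N) (EN N)) :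
    ∃ c C : ℝ, 0 < c ∧ c ≤ C ∧ ∀ N : ℕ, 1 ≤ N →
      c * ((∫ x in (0:ℝ)..1, (uN N x - u x) ^ 2) +
            ∫ x in (0:ℝ)..1, (uN' N x - u' x) ^ 2) ≤ EN N - E ∧
      EN N - E ≤ C * ((∫ x in (0:ℝ)..1, (uN N x - u x) ^ 2) +
            ∫ x in (0:ℝ)..1, (uN' N x - u' x) ^ 2) := by
  obtain ⟨huH, hunorm, hupos, hweak, hlowc, μ, hμ, hgap⟩ := hu
  have cu : Continuous u := huH.1
  have iu' := huH.2.2.2.1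
  have iu'2 := huH.2.2.2.2.1
  -- E is negative
  have hEneg : E ≤ -(z1 + z2) := by
    have h := hlowc (fun _ => (1:ℝ)) (fun _ => (0:ℝ)) oneH1
    simp only [aR] at h
    simp at h
    linarith
  -- s = ∫ u
  set s : ℝ := ∫ x in (0:ℝ)..1, u x with hs_def
  have hs : 0 < s := uIntPos huH hunorm hupos
  have hs1 : s ≤ 1 := by
    have hcs := csII (g := fun _ => (1:ℝ)) zero_le_one (cu.intervalIntegrable 0 1)
      (intervalIntegrable_const (c := 1)) ((cu.pow 2).intervalIntegrable 0 1)
      (by simpa using intervalIntegrable_const (μ := volume) (a := (0:ℝ)) (b := 1) (c := (1:ℝ)))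
    simp only [mul_one, one_pow] at hcs
    rw [hunorm] at hcs
    have h1 : (∫ x in (0:ℝ)..1, (1:ℝ)) = 1 := by simp
    rw [← hs_def] at hcs
    nlinarith [hs, hcs]
  set Z : ℝ := z1 + z2 with hZ_def
  have hZ : 0 < Z := by positivity
  set δ : ℝ := min 1 (1/(4*Z)) with hδ_def
  have hδ0 : 0 < δ := lt_min one_pos (by positivity)
  have hδ1 : δ ≤ 1 := min_le_left _ _
  have hδZ : 2*Z*δ ≤ 1/2 := by
    have h1 : δ ≤ 1/(4*Z) := min_le_right _ _
    have := mul_le_mul_of_nonneg_left h1 (by positivity : (0:ℝ) ≤ 2*Z)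
    calc 2*Z*δ ≤ 2*Z*(1/(4*Z)) := this
      _ = 1/2 := by field_simp; ring
  set c0 : ℝ := μ * s^2 / 16 with hc0_def
  have hc0 : 0 < c0 := by positivity
  set K : ℝ := 1/c0 + 2 + 4*Z/(δ*c0) with hK_def
  have hK : 0 < K := by positivity
  set Cmax : ℝ := max 1 (-E) with hCmax_def
  have hCmax1 : (1:ℝ) ≤ Cmax := le_max_left _ _
  have hCmaxE : -E ≤ Cmax := le_max_right _ _
  refine ⟨1/K, Cmax + 1/K, by positivity, by linarith [hCmax1], ?_⟩
  intro N hN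
  obtain ⟨hNH, hNX, hNnorm, hNpos, hNweak, hNlow⟩ := huN N hN
  set f : ℝ → ℝ := uN N with hf_def
  set f' : ℝ → ℝ := uN' N with hf'_def
  have cf : Continuous f := hNH.1
  have if' := hNH.2.2.2.1
  have if'2 := hNH.2.2.2.2.1
  have ipp : IntervalIntegrable (fun x => u' x * f' x) volume 0 1 :=
    mulII (iu' 0 1) (if' 0 1) iu'2 if'2
  have iff' : IntervalIntegrable (fun x => f' x * f' x) volume 0 1 := by
    have h : (fun x => f' x * f' x) = fun x => (f' x)^2 := by funext x; ring
    rw [h]; exact if'2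
  have iuu' : IntervalIntegrable (fun x => u' x * u' x) volume 0 1 := by
    have h : (fun x => u' x * u' x) = fun x => (u' x)^2 := by funext x; ring
    rw [h]; exact iu'2
  set P : ℝ := ∫ x in (0:ℝ)..1, f' x * f' x with hP_def
  set Q : ℝ := ∫ x in (0:ℝ)..1, u' x * f' x with hQ_def
  set S : ℝ := ∫ x in (0:ℝ)..1, u' x * u' x with hS_def
  set α : ℝ := ∫ x in (0:ℝ)..1, u x * f x with hα_def
  set A : ℝ := ∫ x in (0:ℝ)..1, (f x - u x)^2 with hA_def
  set D2 : ℝ := ∫ x in (0:ℝ)..1, (f' x - u' x)^2 with hD2_def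
  have hAnn : 0 ≤ A := by
    rw [hA_def]; exact intervalIntegral.integral_nonneg zero_le_one (fun x _ => sq_nonneg _)
  have hD2nn : 0 ≤ D2 := by
    rw [hD2_def]; exact intervalIntegral.integral_nonneg zero_le_one (fun x _ => sq_nonneg _)
  -- three weak-form identities
  have hff : (∫ x in (0:ℝ)..1, f x * f x) = 1 := by
    have hcg : (∫ x in (0:ℝ)..1, f x * f x) = ∫ x in (0:ℝ)..1, (f x)^2 :=
      intervalIntegral.integral_congr (fun x _ => by ring)
    rw [hcg, hNnorm]
  have hEN : P - z1 * f 0 * f 0 - z2 * f R * f R = EN N := by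
    have h := hNweak f f' hNH hNX
    rw [hff, mul_one] at h
    simpa [aR] using h
  have huu : S - z1 * u 0 * u 0 - z2 * u R * u R = E := by
    have h := hweak u u' huH
    have h2 : (∫ x in (0:ℝ)..1, u x * u x) = 1 := by
      have hcg : (∫ x in (0:ℝ)..1, u x * u x) = ∫ x in (0:ℝ)..1, (u x)^2 :=
        intervalIntegral.integral_congr (fun x _ => by ring)
      rw [hcg, hunorm]
    rw [h2, mul_one] at h
    simpa [aR] using h
  have huf : Q - z1 * u 0 * f 0 - z2 * u R * f R = E * α := by
    have h := hweak f f' hNH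
    simpa [aR] using h
  -- E ≤ EN N
  have hEE : E ≤ EN N := by
    have h2 := hlowc f f' hNH
    rw [hNnorm, mul_one] at h2
    have h3 : aR z1 z2 R f f' f f' = EN N := by
      simp only [aR]; linarith [hEN]
    linarith only [h2, h3.le, h3.ge]
  -- expansions
  have hA2 : A = 2 - 2*α := by
    have h1 : A = ∫ x in (0:ℝ)..1, (((f x)^2 - 2*(u x * f x)) + (u x)^2) := by
      rw [hA_def]; apply intervalIntegral.integral_congr; intro x _; ring
    rw [h1, intervalIntegral.integral_add (f := fun x => (f x)^2 - 2*(u x * f x)) (g := fun x => (u x)^2)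
        (((cf.pow 2).intervalIntegrable 0 1).sub
          (((cu.mul cf).intervalIntegrable 0 1).const_mul 2))
        ((cu.pow 2).intervalIntegrable 0 1),
      intervalIntegral.integral_sub (f := fun x => (f x)^2) (g := fun x => 2*(u x * f x)) ((cf.pow 2).intervalIntegrable 0 1)
        (((cu.mul cf).intervalIntegrable 0 1).const_mul 2),
      intervalIntegral.integral_const_mul]
    rw [hNnorm, hunorm, ← hα_def]
    ring
  have hD2exp : D2 = P - 2*Q + S := by
    have h1 : D2 = ∫ x in (0:ℝ)..1, ((f' x * f' x - 2*(u' x * f' x)) + u' x * u' x) := by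
      rw [hD2_def]; apply intervalIntegral.integral_congr; intro x _; ring
    rw [h1, intervalIntegral.integral_add (iff'.sub (ipp.const_mul 2)) iuu',
      intervalIntegral.integral_sub iff' (ipp.const_mul 2),
      intervalIntegral.integral_const_mul, ← hP_def, ← hQ_def, ← hS_def]
  have hkey : D2 = (EN N - E) + E*A + z1*(f 0 - u 0)^2 + z2*(f R - u R)^2 := by
    rw [hD2exp, hA2]
    linear_combination hEN - 2*huf + huu
  -- the orthogonal component w
  set w : ℝ → ℝ := fun x => 1 * f x + (-α) * u x with hw_def
  set w' : ℝ → ℝ := fun x => 1 * f' x + (-α) * u' x with hw'_def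
  have hwH : IsH1per w w' := combH1 hNH huH 1 (-α)
  have cw : Continuous w := hwH.1
  have hAw : (∫ x in (0:ℝ)..1, (w x)^2) = 1 - α^2 := by
    have h1 : (∫ x in (0:ℝ)..1, (w x)^2)
        = ∫ x in (0:ℝ)..1, (((f x)^2 - (2*α)*(u x * f x)) + α^2*(u x)^2) := by
      apply intervalIntegral.integral_congr; intro x _; simp only [hw_def]; ring
    rw [h1, intervalIntegral.integral_add (f := fun x => (f x)^2 - (2*α)*(u x * f x)) (g := fun x => α^2*(u x)^2)
        (((cf.pow 2).intervalIntegrable 0 1).sub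
          (((cu.mul cf).intervalIntegrable 0 1).const_mul (2*α)))
        (((cu.pow 2).intervalIntegrable 0 1).const_mul (α^2)),
      intervalIntegral.integral_sub (f := fun x => (f x)^2) (g := fun x => (2*α)*(u x * f x)) ((cf.pow 2).intervalIntegrable 0 1)
        (((cu.mul cf).intervalIntegrable 0 1).const_mul (2*α)),
      intervalIntegral.integral_const_mul, intervalIntegral.integral_const_mul]
    rw [hNnorm, hunorm, ← hα_def]
    ring
  have hwu : (∫ x in (0:ℝ)..1, u x * w x) = 0 := by
    have h1 : (∫ x in (0:ℝ)..1, u x * w x)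
        = ∫ x in (0:ℝ)..1, (u x * f x - α*(u x)^2) := by
      apply intervalIntegral.integral_congr; intro x _; simp only [hw_def]; ring
    rw [h1, intervalIntegral.integral_sub (f := fun x => u x * f x) (g := fun x => α*(u x)^2) ((cu.mul cf).intervalIntegrable 0 1)
        (((cu.pow 2).intervalIntegrable 0 1).const_mul α),
      intervalIntegral.integral_const_mul, hunorm, ← hα_def]
    ring
  have hα2 : α^2 ≤ 1 := by
    have h := intervalIntegral.integral_nonneg (μ := volume) (f := fun x => (w x)^2) zero_le_one
      (fun x _ => sq_nonneg _)
    rw [hAw] at h; linarith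
  have haww : aR z1 z2 R w w' w w' = EN N - E*α^2 := by
    have hw'int : (∫ x in (0:ℝ)..1, w' x * w' x) = P - (2*α)*Q + α^2*S := by
      have h1 : (∫ x in (0:ℝ)..1, w' x * w' x)
          = ∫ x in (0:ℝ)..1, ((f' x * f' x - (2*α)*(u' x * f' x)) + α^2*(u' x * u' x)) := by
        apply intervalIntegral.integral_congr; intro x _; simp only [hw'_def]; ring
      rw [h1, intervalIntegral.integral_add (iff'.sub (ipp.const_mul (2*α)))
          (iuu'.const_mul (α^2)),
        intervalIntegral.integral_sub iff' (ipp.const_mul (2*α)),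
        intervalIntegral.integral_const_mul, intervalIntegral.integral_const_mul,
        ← hP_def, ← hQ_def, ← hS_def]
    simp only [aR]
    rw [hw'int]
    simp only [hw_def]
    linear_combination hEN - 2*α*huf + α^2*huu
  have hgapw : E + μ * (1 - α^2) ≤ EN N := by
    rcases eq_or_lt_of_le (by linarith only [hα2] : (0:ℝ) ≤ 1 - α^2) with h0 | hposw
    · rw [← h0, mul_zero, add_zero]; exact hEE
    · set t : ℝ := Real.sqrt (1 - α^2) with ht_def
      have ht0 : 0 < t := Real.sqrt_pos.2 hposw
      have ht2 : t^2 = 1 - α^2 := Real.sq_sqrt (by linarith)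
      have hvH := combH1 hwH hwH (1/t) 0
      have hvnorm : (∫ x in (0:ℝ)..1, ((fun x => (1/t) * w x + 0 * w x) x)^2) = 1 := by
        have h1 : (∫ x in (0:ℝ)..1, ((fun x => (1/t) * w x + 0 * w x) x)^2)
            = ∫ x in (0:ℝ)..1, (1/t)^2 * (w x)^2 := by
          apply intervalIntegral.integral_congr; intro x _; simp; ring
        rw [h1, intervalIntegral.integral_const_mul, hAw, ← ht2]
        field_simp
      have hvorth : (∫ x in (0:ℝ)..1, u x * ((fun x => (1/t) * w x + 0 * w x) x)) = 0 := by
        have h1 : (∫ x in (0:ℝ)..1, u x * ((fun x => (1/t) * w x + 0 * w x) x))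
            = ∫ x in (0:ℝ)..1, (1/t) * (u x * w x) := by
          apply intervalIntegral.integral_congr; intro x _; simp; ring
        rw [h1, intervalIntegral.integral_const_mul, hwu, mul_zero]
      have hgapv := hgap _ _ hvH hvnorm hvorth
      have haRv : aR z1 z2 R (fun x => (1/t) * w x + 0 * w x) (fun x => (1/t) * w' x + 0 * w' x)
          (fun x => (1/t) * w x + 0 * w x) (fun x => (1/t) * w' x + 0 * w' x)
          = (1/t)^2 * aR z1 z2 R w w' w w' := by
        have h1 : (∫ x in (0:ℝ)..1, ((fun x => (1/t) * w' x + 0 * w' x) x) * ((fun x => (1/t) * w' x + 0 * w' x) x))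
            = ∫ x in (0:ℝ)..1, (1/t)^2 * (w' x * w' x) := by
          apply intervalIntegral.integral_congr; intro x _; simp; ring
        simp only [aR]
        rw [h1, intervalIntegral.integral_const_mul]
        simp
        ring
      rw [haRv, haww] at hgapv
      have ht2' : (1/t)^2 = 1/(1-α^2) := by rw [one_div, one_div, ← ht2]; simp [sq]
      rw [ht2'] at hgapv
      have hne : (1:ℝ) - α^2 ≠ 0 := ne_of_gt hposw
      have h2 : (E + μ) * (1 - α^2) ≤ EN N - E*α^2 := by
        have := mul_le_mul_of_nonneg_right hgapv (le_of_lt hposw)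
        calc (E + μ) * (1 - α^2) ≤ (1/(1-α^2) * (EN N - E*α^2)) * (1 - α^2) := this
          _ = EN N - E*α^2 := by field_simp
      have expand : (E + μ) * (1 - α^2) = E - E*α^2 + μ*(1-α^2) := by ring
      rw [expand] at h2
      linarith only [h2]
  -- case analysis for the L² lower bound
  have hss : s^2 ≤ 1 := by nlinarith only [hs, hs1]
  have hα1 : α ≤ 1 := by linarith only [hα2, sq_nonneg (α-1)]
  have hαm1 : -1 ≤ α := by linarith only [hα2, sq_nonneg (α+1)]
  have hlowN : c0 * A ≤ EN N - E := by
    rw [hA2, hc0_def]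
    rcases le_total (1/2 : ℝ) α with hc1 | hc1
    · have e3 : 0 ≤ μ*(1-α) := mul_nonneg hμ.le (by linarith)
      have e4 : s^2/8 ≤ 1+α := by linarith [hss]
      have e5 := mul_le_mul_of_nonneg_left e4 e3
      nlinarith only [e5, hgapw]
    · rcases le_total (-(1/2) : ℝ) α with hc2 | hc2
      · have e0 : s^2*(2-2*α) ≤ 1*3 :=
          mul_le_mul hss (by linarith) (by linarith) zero_le_one
        have e1 := mul_le_mul_of_nonneg_left e0 hμ.le
        have e2' : (3/4:ℝ) ≤ 1-α^2 := by nlinarith only [hc1, hc2]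
        have e2 := mul_le_mul_of_nonneg_left e2' hμ.le
        nlinarith only [e1, e2, hgapw, hμ.le]
      · -- α ≤ -1/2 : use nonnegativity of ∫ f
        have hintw : (∫ x in (0:ℝ)..1, w x) = (∫ x in (0:ℝ)..1, f x) - α * s := by
          have h1 : (∫ x in (0:ℝ)..1, w x) = ∫ x in (0:ℝ)..1, (f x - α * u x) := by
            apply intervalIntegral.integral_congr; intro x _; simp only [hw_def]; ring
          rw [h1, intervalIntegral.integral_sub (cf.intervalIntegrable 0 1)
              ((cu.intervalIntegrable 0 1).const_mul α),
            intervalIntegral.integral_const_mul, ← hs_def]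
        have hwge : s/2 ≤ ∫ x in (0:ℝ)..1, w x := by
          rw [hintw]
          have hprod : 0 ≤ s*(-α-1/2) := mul_nonneg hs.le (by linarith)
          nlinarith only [hNpos, hprod]
        have hcsw : (∫ x in (0:ℝ)..1, w x)^2 ≤ 1 - α^2 := by
          have h := csII (g := fun _ => (1:ℝ)) zero_le_one (cw.intervalIntegrable 0 1)
            (intervalIntegrable_const (c := 1)) ((cw.pow 2).intervalIntegrable 0 1)
            (by simpa using intervalIntegrable_const (μ := volume) (a := (0:ℝ)) (b := 1) (c := (1:ℝ)))
          simp only [mul_one, one_pow] at h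
          rw [hAw] at h
          have h1 : (∫ x in (0:ℝ)..1, (1:ℝ)) = 1 := by simp
          rw [h1, mul_one] at h
          exact h
        have hwge2 := mul_self_le_mul_self (by positivity : (0:ℝ) ≤ s/2) hwge
        have hAwlb : s^2/4 ≤ 1 - α^2 := by nlinarith only [hwge2, hcsw]
        have e1 : s^2*(2-2*α) ≤ s^2*4 :=
          mul_le_mul_of_nonneg_left (by linarith) (sq_nonneg s)
        have e2 := mul_le_mul_of_nonneg_left e1 hμ.le
        have e3 := mul_le_mul_of_nonneg_left hAwlb hμ.le
        nlinarith only [e2, e3, hgapw]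
  -- trace bounds at 0 and R
  have hrepe : ∀ x : ℝ, (fun x => f x - u x) x
      = (fun x => f x - u x) 0 + ∫ t in (0:ℝ)..x, (fun t => f' t - u' t) t := by
    intro x
    simp only []
    rw [hNH.2.2.2.2.2 x, huH.2.2.2.2.2 x,
      intervalIntegral.integral_sub (if' 0 x) (iu' 0 x)]
    have hf0 : f 0 = f 0 + ∫ t in (0:ℝ)..(0:ℝ), f' t := by simp
    have hu0 : u 0 = u 0 + ∫ t in (0:ℝ)..(0:ℝ), u' t := by simp
    rw [← hNH.2.2.2.2.2 0, ← huH.2.2.2.2.2 0] at *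
    ring
  have ie'2 : IntervalIntegrable (fun t => ((f' t - u' t))^2) volume 0 1 := by
    have h : (fun t => (f' t - u' t)^2)
        = fun t => (((f' t)^2 - 2*(u' t * f' t)) + (u' t)^2) := by funext t; ring
    rw [h]
    exact (if'2.sub (ipp.const_mul 2)).add iu'2
  have htr0 := traceBound (e := fun x => f x - u x) (e' := fun t => f' t - u' t) (cf.sub cu)
    (fun a b => (if' a b).sub (iu' a b)) ie'2 hrepe (p := 0) ⟨le_refl 0, zero_le_one⟩ hδ0 hδ1
  have htrR := traceBound (e := fun x => f x - u x) (e' := fun t => f' t - u' t) (cf.sub cu)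
    (fun a b => (if' a b).sub (iu' a b)) ie'2 hrepe (p := R) ⟨hR.1.le, hR.2.le⟩ hδ0 hδ1
  rw [← hA_def, ← hD2_def] at htr0 htrR
  -- absorb the boundary terms
  have hzbound : z1*(f 0 - u 0)^2 + z2*(f R - u R)^2 ≤ (2*Z/δ)*A + (1/2)*D2 := by
    have h1 := mul_le_mul_of_nonneg_left htr0 hz1.le
    have h2 := mul_le_mul_of_nonneg_left htrR hz2.le
    have h3 : z1*((2/δ)*A + 2*δ*D2) + z2*((2/δ)*A + 2*δ*D2) = (2*Z/δ)*A + (2*Z*δ)*D2 := by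
      rw [hZ_def]; ring
    have h4 : (2*Z*δ)*D2 ≤ (1/2)*D2 := mul_le_mul_of_nonneg_right hδZ hD2nn
    linarith only [h1, h2, h3.le, h3.ge, h4]
  have hEA : E*A ≤ 0 := mul_nonpos_of_nonpos_of_nonneg (by linarith only [hEneg, hZ]) hAnn
  have hD2b : D2 ≤ 2*(EN N - E) + (4*Z/δ)*A := by
    have h5 : (4*Z/δ)*A = 2*((2*Z/δ)*A) := by ring
    rw [h5]
    linarith only [hkey, hzbound, hEA]
  have hsum : A + D2 ≤ K * (EN N - E) := by
    have hA1 : A ≤ (EN N - E)/c0 := by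
      rw [le_div_iff₀ hc0]; linarith only [hlowN, mul_comm A c0]
    have h6 : (4*Z/δ)*A ≤ (4*Z/δ)*((EN N - E)/c0) :=
      mul_le_mul_of_nonneg_left hA1 (by positivity)
    calc A + D2 ≤ (EN N - E)/c0 + (2*(EN N - E) + 4*Z/δ*A) := add_le_add hA1 hD2b
      _ ≤ (EN N - E)/c0 + (2*(EN N - E) + 4*Z/δ*((EN N - E)/c0)) := by linarith only [h6]
      _ = K * (EN N - E) := by rw [hK_def]; field_simp; ring
  constructor
  · have hmul := mul_le_mul_of_nonneg_left hsum (by positivity : (0:ℝ) ≤ 1/K)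
    calc 1/K * (A + D2) ≤ 1/K * (K * (EN N - E)) := hmul
      _ = EN N - E := by field_simp
  · have t1 : 0 ≤ z1*(f 0 - u 0)^2 := by positivity
    have t2 : 0 ≤ z2*(f R - u R)^2 := by positivity
    have t3 : D2 ≤ Cmax * D2 := le_mul_of_one_le_left hD2nn hCmax1
    have t4 : -(E*A) ≤ Cmax*A := by
      have h := mul_le_mul_of_nonneg_right hCmaxE hAnn
      linarith only [h]
    have t5 : 0 ≤ (1/K)*(A+D2) := mul_nonneg (by positivity) (by linarith only [hAnn, hD2nn])
    have t6 : (Cmax + 1/K)*(A+D2) = Cmax*A + Cmax*D2 + (1/K)*(A+D2) := by ring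
    linarith only [hkey, t1, t2, t3, t4, t5, t6]

end
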